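/- Let φ: (M⁴,g) → (N⁴,h) be a smooth map between 4-manifolds with M compact, S₂ = 0, and rank dφ = 4 at every point. Then φ is harmonic. (Since dφ_p is an isomorphism, there is a unique vector field Z with dφ(Z) = τ(φ); plugging X = Y = Z into S₂ = 0 gives ½|τ(φ)|²|Z|² + Z(|τ(φ)|²) = 0, and evaluating at a maximum point of |τ(φ)|² yields τ(φ) = 0.) -/
import Mathlib


open scoped RealInnerProductSpace
noncomputable section

/-- A fixed orthonormal frame of the (model) tangent space of the `m`-dimensional
Riemannian manifold `M`. -/
def onb (m : ℕ) : OrthonormalBasis (Fin m) ℝ (EuclideanSpace ℝ (Fin m)) :=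
  EuclideanSpace.basisFun (Fin m) ℝ

/-- The biharmonic stress-energy tensor
`S₂(X,Y) = ½|τ(φ)|² ⟨X,Y⟩ + ⟨dφ,∇τ(φ)⟩ ⟨X,Y⟩ − ⟨dφ(X),∇_Y τ(φ)⟩ − ⟨dφ(Y),∇_X τ(φ)⟩`,
expressed pointwise in terms of the differential `dphi` of `φ`, the tension field `tau`
and its covariant derivative `Dtau` (the trace `⟨dφ,∇τ(φ)⟩` being computed in an
orthonormal frame). -/
def S2 {m : ℕ} {F : Type*} [NormedAddCommGroup F] [InnerProductSpace ℝ F]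
    (dphi : EuclideanSpace ℝ (Fin m) →ₗ[ℝ] F) (tau : F)
    (Dtau : EuclideanSpace ℝ (Fin m) →ₗ[ℝ] F)
    (X Y : EuclideanSpace ℝ (Fin m)) : ℝ :=
  (1 / 2 : ℝ) * ‖tau‖ ^ 2 * ⟪X, Y⟫
    + (∑ i, ⟪dphi (onb m i), Dtau (onb m i)⟫) * ⟪X, Y⟫
    - ⟪dphi X, Dtau Y⟫ - ⟪dphi Y, Dtau X⟫

/-- A map `φ : (M⁴,g) → (N⁴,h)` between 4-manifolds, `M` compact, with
`S₂ = 0` and `rank dφ = 4` (i.e. `dφ_p` invertible) at every point, is harmonic.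
Here `dnorm p X = X(|τ(φ)|²)(p) = 2⟨∇_X τ(φ), τ(φ)⟩` is the differential of `|τ(φ)|²`,
which vanishes at a maximum point of `|τ(φ)|²` (attained by compactness). -/
theorem dim_four_full_rank_S2_zero_harmonic
    (M : Type*) [TopologicalSpace M] [CompactSpace M] [Nonempty M]
    (dphi : M → EuclideanSpace ℝ (Fin 4) →ₗ[ℝ] EuclideanSpace ℝ (Fin 4))
    (tau : M → EuclideanSpace ℝ (Fin 4))
    (Dtau : M → EuclideanSpace ℝ (Fin 4) →ₗ[ℝ] EuclideanSpace ℝ (Fin 4))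
    (dnorm : M → EuclideanSpace ℝ (Fin 4) → ℝ)
    (hrank : ∀ p, Function.Bijective (dphi p))
    (hS2 : ∀ p X Y, S2 (dphi p) (tau p) (Dtau p) X Y = 0)
    (hcont : Continuous fun p => ‖tau p‖)
    (hdnorm : ∀ p X, dnorm p X = 2 * ⟪Dtau p X, tau p⟫)
    (hcrit : ∀ p₀, (∀ p, ‖tau p‖ ≤ ‖tau p₀‖) → ∀ X, dnorm p₀ X = 0) :
    ∀ p, tau p = 0 := by
  -- maximum point
  obtain ⟨p₀, _, hmax⟩ := isCompact_univ.exists_isMaxOn Set.univ_nonempty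
    hcont.continuousOn
  have hmax' : ∀ p, ‖tau p‖ ≤ ‖tau p₀‖ := fun p => hmax (Set.mem_univ p)
  -- criticality at p₀
  have hperp : ∀ X, ⟪Dtau p₀ X, tau p₀⟫ = 0 := by
    intro X
    have := hcrit p₀ hmax' X
    rw [hdnorm] at this
    linarith
  -- trace identity
  set T : ℝ := ∑ i, ⟪dphi p₀ (onb 4 i), Dtau p₀ (onb 4 i)⟫ with hT
  have hone : ∀ i : Fin 4, ⟪(onb 4) i, (onb 4) i⟫ = (1 : ℝ) := by
    intro i
    rw [real_inner_self_eq_norm_sq, (onb 4).orthonormal.1 i]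
    norm_num
  have htrace : T = -‖tau p₀‖ ^ 2 := by
    have hsum : ∑ i : Fin 4, S2 (dphi p₀) (tau p₀) (Dtau p₀) (onb 4 i) (onb 4 i) = 0 := by
      simp [hS2]
    simp only [S2, hone, mul_one] at hsum
    rw [Finset.sum_sub_distrib, Finset.sum_sub_distrib, Finset.sum_add_distrib,
      Finset.sum_const, Finset.sum_const] at hsum
    simp only [Finset.card_univ, Fintype.card_fin, nsmul_eq_mul, ← hT] at hsum
    push_cast at hsum
    linarith
  -- plug in Z with dphi Z = tau
  obtain ⟨Z, hZ⟩ := (hrank p₀).2 (tau p₀)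
  have hS := hS2 p₀ Z Z
  simp only [S2, ← hT, hZ] at hS
  have hZt : ⟪tau p₀, Dtau p₀ Z⟫ = 0 := by
    rw [real_inner_comm]; exact hperp Z
  rw [hZt, htrace] at hS
  have hmain : ‖tau p₀‖ ^ 2 * ⟪Z, Z⟫ = 0 := by linarith
  have htau0 : tau p₀ = 0 := by
    by_contra h
    have hZ0 : Z ≠ 0 := by
      intro h0; apply h; rw [← hZ, h0, map_zero]
    have hZn : ‖Z‖ ≠ 0 := norm_ne_zero_iff.mpr hZ0
    have htn : ‖tau p₀‖ ≠ 0 := norm_ne_zero_iff.mpr h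
    have h1 : (0:ℝ) < ⟪Z, Z⟫ := by rw [real_inner_self_eq_norm_sq]; positivity
    have h2 : (0:ℝ) < ‖tau p₀‖ ^ 2 := by positivity
    nlinarith
  intro p
  have := hmax' p
  rw [htau0, norm_zero] at this
  exact norm_le_zero_iff.mp this

end
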